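/- For a simple stopping time, E_S := Σ_{i=1}^{N} E_{t_i} ΔS_i is a conditional expectation: it is a strictly positive, order continuous, positive linear projection on E with E_S(e) = e, where (ΔS_i) are pairwise disjoint band projections with Σ_i ΔS_i = I and each ΔS_i commutes with E_{t_i}. -/

import Mathlib

variable {E : Type*} [AddCommGroup E] [Lattice E]
  [CovariantClass E E (· + ·) (· ≤ ·)] [Module ℝ E]

/-- `E` is Dedekind complete. -/
def DedekindComplete (E : Type*) [AddCommGroup E] [Lattice E] : Prop :=
  ∀ A : Set E, A.Nonempty → BddAbove A → ∃ s, IsLUB A s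

/-- `e` is a weak order unit. -/
def IsWeakUnit (e : E) : Prop :=
  0 < e ∧ ∀ x : E, 0 ≤ x → IsLUB (Set.range fun n : ℕ => x ⊓ n • e) x

/-- A band (order) projection. -/
def IsBandProj (P : E →ₗ[ℝ] E) : Prop :=
  (∀ x, P (P x) = P x) ∧ ∀ x : E, 0 ≤ x → 0 ≤ P x ∧ P x ≤ x

/-- A conditional expectation with respect to the weak order unit `e`. -/
def IsCondExp (e : E) (F : E →ₗ[ℝ] E) : Prop :=
  (∀ x, F (F x) = F x) ∧ (∀ x : E, 0 < x → 0 < F x) ∧ F e = e ∧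
  ∀ V : ℕ → E, Antitone V → IsGLB (Set.range V) 0 →
    IsGLB (Set.range fun n => F (V n)) 0

/-- Positive linear maps are monotone. -/
lemma aux_mono_of_pos (F : E →ₗ[ℝ] E) (h : ∀ x : E, 0 ≤ x → 0 ≤ F x)
    {x y : E} (hxy : x ≤ y) : F x ≤ F y := by
  have h1 := h (y - x) (sub_nonneg.mpr hxy)
  rw [map_sub] at h1
  exact sub_nonneg.mp h1

/-- A conditional expectation is positive. -/
lemma aux_condExp_pos (e : E) (F : E →ₗ[ℝ] E) (h : IsCondExp e F)
    {x : E} (hx : 0 ≤ x) : 0 ≤ F x := by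
  rcases eq_or_lt_of_le hx with h0 | h0
  · rw [← h0, map_zero]
  · exact (h.2.1 x h0).le

/-- A band projection fixes elements dominated by a fixed element. -/
lemma aux_bp_fix (P : E →ₗ[ℝ] E) (hP : IsBandProj P) {y z : E}
    (hy : 0 ≤ y) (hyz : y ≤ z) (hz : P z = z) : P y = y := by
  have h1 := (hP.2 (z - y) (sub_nonneg.mpr hyz)).2
  rw [map_sub, hz] at h1
  exact le_antisymm (hP.2 y hy).2 ((sub_le_sub_iff_left z).mp h1)

/-- A band projection kills elements dominated by a killed element. -/
lemma aux_bp_kill (P : E →ₗ[ℝ] E) (hP : IsBandProj P) {y z : E}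
    (hy : 0 ≤ y) (hyz : y ≤ z) (hz : P z = 0) : P y = 0 := by
  have h1 := (hP.2 (z - y) (sub_nonneg.mpr hyz)).1
  rw [map_sub, hz, zero_sub, le_neg] at h1
  simpa using le_antisymm (by simpa using h1) (hP.2 y hy).1

/-- Commutation of a band projection with a conditional expectation fixing `P e`:
bounded case. -/
lemma aux_comm_bounded (e : E) (T P : E →ₗ[ℝ] E) (hT : IsCondExp e T)
    (hP : IsBandProj P) (hTPe : T (P e) = P e) {x : E} (n : ℕ)
    (hx : 0 ≤ x) (hxn : x ≤ n • e) : P (T x) = T (P x) := by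
  have hTpos : ∀ z : E, 0 ≤ z → 0 ≤ T z := fun z hz => aux_condExp_pos e T hT hz
  have hTmono : ∀ {u v : E}, u ≤ v → T u ≤ T v := fun h => aux_mono_of_pos T hTpos h
  have hPmono : ∀ {u v : E}, u ≤ v → P u ≤ P v :=
    fun h => aux_mono_of_pos P (fun z hz => (hP.2 z hz).1) h
  set a : E := P x with ha
  set b : E := x - P x with hb
  have hxab : x = a + b := by rw [ha, hb]; abel
  have ha0 : 0 ≤ a := (hP.2 x hx).1
  have hb0 : 0 ≤ b := sub_nonneg.mpr (hP.2 x hx).2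
  -- `a` lies below `n • P e`, a fixed element of `P`.
  have haPe : a ≤ n • P e := by
    have := hPmono hxn
    rwa [map_nsmul] at this
  have hPnPe : P (n • P e) = n • P e := by rw [map_nsmul, hP.1]
  have hPTa : P (T a) = T a := by
    refine aux_bp_fix P hP (z := n • P e) (hTpos a ha0) ?_ hPnPe
    calc T a ≤ T (n • P e) := hTmono haPe
      _ = n • T (P e) := map_nsmul T _ _
      _ = n • P e := by rw [hTPe]
  -- `b` lies below `n • (e - P e)`, a killed element of `P`.
  have hPb : P b = 0 := by rw [hb, map_sub, hP.1, sub_self]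
  have hbq : b ≤ n • (e - P e) := by
    have h1 := (hP.2 (n • e - x) (sub_nonneg.mpr hxn)).2
    rw [map_sub, map_nsmul] at h1
    have : n • (e - P e) - b = (n • e - x) - (n • P e - P x) := by
      rw [hb, smul_sub]; abel
    rw [← sub_nonneg, this, sub_nonneg]
    exact h1
  have hPq : P (n • (e - P e)) = 0 := by
    rw [map_nsmul, map_sub, hP.1, sub_self, smul_zero]
  have hPTb : P (T b) = 0 := by
    refine aux_bp_kill P hP (hTpos b hb0) ?_ hPq
    calc T b ≤ T (n • (e - P e)) := hTmono hbq
      _ = n • (T e - T (P e)) := by rw [map_nsmul, map_sub]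
      _ = n • (e - P e) := by rw [hT.2.2.1, hTPe]
  calc P (T x) = P (T a) + P (T b) := by rw [hxab, map_add, map_add]
    _ = T a + 0 := by rw [hPTa, hPTb]
    _ = T (P x) := by rw [add_zero, ha]

/-- Commutation of a band projection with a conditional expectation fixing `P e`. -/
lemma aux_comm_all (e : E) (he : IsWeakUnit e) (T P : E →ₗ[ℝ] E)
    (hT : IsCondExp e T) (hP : IsBandProj P) (hTPe : T (P e) = P e) (x : E) :
    P (T x) = T (P x) := by
  have hTpos : ∀ z : E, 0 ≤ z → 0 ≤ T z := fun z hz => aux_condExp_pos e T hT hz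
  have hTmono : ∀ {u v : E}, u ≤ v → T u ≤ T v := fun h => aux_mono_of_pos T hTpos h
  have hPpos : ∀ z : E, 0 ≤ z → 0 ≤ P z := fun z hz => (hP.2 z hz).1
  suffices h : ∀ y : E, 0 ≤ y → P (T y) = T (P y) by
    have h1 := h x⁺ (posPart_nonneg x)
    have h2 := h x⁻ (negPart_nonneg x)
    have hx : x = x⁺ - x⁻ := (posPart_sub_negPart x).symm
    rw [hx, map_sub, map_sub, map_sub, map_sub, h1, h2]
  intro y hy
  set V : ℕ → E := fun n => y - y ⊓ n • e with hVdef
  have hmono : Monotone (fun n : ℕ => y ⊓ n • e) := fun n m hnm =>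
    inf_le_inf_left y (nsmul_le_nsmul_left he.1.le hnm)
  have hanti : Antitone V := fun n m hnm => sub_le_sub_left (hmono hnm) y
  have hlub := he.2 y hy
  have hglb : IsGLB (Set.range V) 0 := by
    constructor
    · rintro _ ⟨n, rfl⟩
      exact sub_nonneg.mpr (hlub.1 ⟨n, rfl⟩)
    · intro c hc
      have hstep : ∀ n : ℕ, y ⊓ n • e ≤ y - c := fun n =>
        le_sub_comm.mp (hc ⟨n, rfl⟩)
      have hub : y ≤ y - c := hlub.2 (by rintro _ ⟨n, rfl⟩; exact hstep n)
      exact (le_sub_self_iff y).mp hub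
  have hcommV : ∀ n : ℕ, P (T y) - T (P y) = P (T (V n)) - T (P (V n)) := by
    intro n
    have h0n : (0 : E) ≤ y ⊓ n • e :=
      le_inf hy (nsmul_nonneg he.1.le n)
    have hbd : y ⊓ n • e ≤ n • e := inf_le_right
    have hcb := aux_comm_bounded e T P hT hP hTPe n h0n hbd
    have hy' : (y ⊓ n • e) + V n = y := by
      show y ⊓ n • e + (y - y ⊓ n • e) = y
      rw [add_comm, sub_add_cancel]
    have hTy : T y = T (y ⊓ n • e) + T (V n) := by rw [← map_add, hy']
    have hPy : P y = P (y ⊓ n • e) + P (V n) := by rw [← map_add, hy']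
    calc P (T y) - T (P y)
        = (P (T (y ⊓ n • e)) + P (T (V n))) - (T (P (y ⊓ n • e)) + T (P (V n))) := by
          rw [hTy, hPy, map_add, map_add]
      _ = P (T (V n)) - T (P (V n)) := by rw [hcb]; abel
  have hTglb := hT.2.2.2 V hanti hglb
  have hV0 : ∀ n, 0 ≤ V n := fun n => hglb.1 ⟨n, rfl⟩
  have hle1 : ∀ n, P (T y) - T (P y) ≤ T (V n) := by
    intro n
    rw [hcommV n]
    have h1 : P (T (V n)) ≤ T (V n) := (hP.2 _ (hTpos _ (hV0 n))).2
    have h2 : 0 ≤ T (P (V n)) := hTpos _ (hPpos _ (hV0 n))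
    calc P (T (V n)) - T (P (V n)) ≤ T (V n) - 0 := sub_le_sub h1 h2
      _ = T (V n) := sub_zero _
  have hle2 : ∀ n, -(P (T y) - T (P y)) ≤ T (V n) := by
    intro n
    rw [hcommV n, neg_sub]
    have h1 : T (P (V n)) ≤ T (V n) := hTmono (hP.2 _ (hV0 n)).2
    have h2 : 0 ≤ P (T (V n)) := hPpos _ (hTpos _ (hV0 n))
    calc T (P (V n)) - P (T (V n)) ≤ T (V n) - 0 := sub_le_sub h1 h2
      _ = T (V n) := sub_zero _
  have hc1 : P (T y) - T (P y) ≤ 0 := hTglb.2 (by rintro _ ⟨n, rfl⟩; exact hle1 n)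
  have hc2 : -(P (T y) - T (P y)) ≤ 0 := hTglb.2 (by rintro _ ⟨n, rfl⟩; exact hle2 n)
  have hfin : P (T y) - T (P y) = 0 := le_antisymm hc1 (by simpa using neg_nonpos.mp hc2)
  exact sub_eq_zero.mp hfin

/-- Sum of nonnegative elements is nonnegative. -/
lemma aux_sum_nonneg {ι : Type*} (s : Finset ι) (f : ι → E)
    (h : ∀ i ∈ s, 0 ≤ f i) : 0 ≤ ∑ i ∈ s, f i := by
  induction s using Finset.cons_induction with
  | empty => simp
  | cons a s ha ih =>
    rw [Finset.sum_cons]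
    have h1 : 0 ≤ f a := h a (Finset.mem_cons_self a s)
    have h2 : 0 ≤ ∑ i ∈ s, f i := ih fun i hi => h i (Finset.mem_cons_of_mem hi)
    calc (0 : E) = 0 + 0 := (add_zero 0).symm
      _ ≤ f a + ∑ i ∈ s, f i := add_le_add h1 h2

/-- Termwise comparison of sums. -/
lemma aux_sum_le_sum {ι : Type*} (s : Finset ι) (f g : ι → E)
    (h : ∀ i ∈ s, f i ≤ g i) : ∑ i ∈ s, f i ≤ ∑ i ∈ s, g i := by
  induction s using Finset.cons_induction with
  | empty => simp
  | cons a s ha ih =>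
    rw [Finset.sum_cons, Finset.sum_cons]
    exact add_le_add (h a (Finset.mem_cons_self a s))
      (ih fun i hi => h i (Finset.mem_cons_of_mem hi))

/-- A single nonnegative term is at most the sum. -/
lemma aux_single_le_sum {ι : Type*} [DecidableEq ι] (s : Finset ι) (f : ι → E)
    (h : ∀ i ∈ s, 0 ≤ f i) {i : ι} (hi : i ∈ s) : f i ≤ ∑ j ∈ s, f j := by
  rw [← Finset.add_sum_erase s f hi]
  exact le_add_of_nonneg_right
    (aux_sum_nonneg _ _ fun j hj => h j (Finset.mem_of_mem_erase hj))

/-- If finitely many antitone sequences each have infimum `0`, any lower bound of the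
sum of the sequences is nonpositive. -/
lemma aux_glb_sum {ι : Type*} [DecidableEq ι] (s : Finset ι) :
    ∀ f : ι → ℕ → E, (∀ i ∈ s, Antitone (f i)) →
      (∀ i ∈ s, IsGLB (Set.range (f i)) 0) →
      ∀ c : E, (∀ n, c ≤ ∑ i ∈ s, f i n) → c ≤ 0 := by
  induction s using Finset.induction_on with
  | empty =>
    intro f _ _ c hc
    simpa using hc 0
  | insert a s ha ih =>
    intro f hanti hglb c hc
    simp only [Finset.sum_insert ha] at hc
    have key : ∀ m : ℕ, c - f a m ≤ 0 := by
      intro m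
      refine ih f (fun i hi => hanti i (Finset.mem_insert_of_mem hi))
        (fun i hi => hglb i (Finset.mem_insert_of_mem hi)) _ (fun n => ?_)
      have h1 : c ≤ f a (max n m) + ∑ i ∈ s, f i (max n m) := hc _
      have h2 : f a (max n m) ≤ f a m :=
        hanti a (Finset.mem_insert_self a s) (le_max_right n m)
      have h3 : ∑ i ∈ s, f i (max n m) ≤ ∑ i ∈ s, f i n :=
        aux_sum_le_sum s _ _ fun i hi =>
          hanti i (Finset.mem_insert_of_mem hi) (le_max_left n m)
      calc c - f a m ≤ (f a (max n m) + ∑ i ∈ s, f i (max n m)) - f a m :=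
            sub_le_sub_right h1 _
        _ = (f a (max n m) - f a m) + ∑ i ∈ s, f i (max n m) := by abel
        _ ≤ 0 + ∑ i ∈ s, f i n := add_le_add (sub_nonpos.mpr h2) h3
        _ = ∑ i ∈ s, f i n := zero_add _
    have hclb : c ∈ lowerBounds (Set.range (f a)) := by
      rintro _ ⟨m, rfl⟩
      exact sub_nonpos.mp (key m)
    exact (hglb a (Finset.mem_insert_self a s)).2 hclb

/-- For a simple stopping time, `E_S = ∑ i, E_{t i} ∘ ΔS i` is a conditional
expectation: an idempotent, positive, strictly positive, order continuous linear
map fixing the weak order unit `e`. -/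
theorem simple_stopping_time_condExp
    (hE : DedekindComplete E) (e : E) (he : IsWeakUnit e)
    (N : ℕ) (Et : Fin N → (E →ₗ[ℝ] E))
    (hEt : ∀ i, IsCondExp e (Et i))
    (hfiltr : ∀ i j : Fin N, i ≤ j → ∀ x : E,
      Et i (Et j x) = Et i x ∧ Et j (Et i x) = Et i x)
    (ΔS : Fin N → (E →ₗ[ℝ] E))
    (hΔS : ∀ i, IsBandProj (ΔS i))
    (hSdisj : ∀ i j, i ≠ j → ∀ x : E, ΔS i (ΔS j x) = 0)
    (hSsum : ∀ x : E, ∑ i, ΔS i x = x)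
    (hScomm : ∀ i, ∀ x : E, ΔS i (Et i x) = Et i (ΔS i x)) :
    IsCondExp e (∑ i, (Et i) ∘ₗ (ΔS i)) := by
  classical
  set F : E →ₗ[ℝ] E := ∑ i, (Et i) ∘ₗ (ΔS i) with hF
  have hFapp : ∀ x : E, F x = ∑ i, Et i (ΔS i x) := fun x => by
    rw [hF, LinearMap.sum_apply]
    rfl
  have hEpos : ∀ i, ∀ x : E, 0 ≤ x → 0 ≤ Et i x :=
    fun i x hx => aux_condExp_pos e (Et i) (hEt i) hx
  have hEmono : ∀ i, ∀ {u v : E}, u ≤ v → Et i u ≤ Et i v :=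
    fun i {u v} h => aux_mono_of_pos (Et i) (hEpos i) h
  have hPpos : ∀ i, ∀ {x : E}, 0 ≤ x → 0 ≤ ΔS i x := fun i {x} hx => ((hΔS i).2 x hx).1
  have hPle : ∀ i, ∀ {x : E}, 0 ≤ x → ΔS i x ≤ x := fun i {x} hx => ((hΔS i).2 x hx).2
  have hFpos : ∀ x : E, 0 ≤ x → 0 ≤ F x := fun x hx => by
    rw [hFapp]
    exact aux_sum_nonneg _ _ fun i _ => hEpos i _ (hPpos i hx)
  -- `Et j` fixes `ΔS i e` for `i ≤ j`.
  have hfix : ∀ i j : Fin N, i ≤ j → Et j (ΔS i e) = ΔS i e := by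
    intro i j hij
    have h1 : Et i (ΔS i e) = ΔS i e := by
      rw [← hScomm i e, (hEt i).2.2.1]
    calc Et j (ΔS i e) = Et j (Et i (ΔS i e)) := by rw [h1]
      _ = Et i (ΔS i e) := (hfiltr i j hij _).2
      _ = ΔS i e := h1
  -- `ΔS i` commutes with `Et j` for `i ≤ j`.
  have hcomm : ∀ i j : Fin N, i ≤ j → ∀ x : E, ΔS i (Et j x) = Et j (ΔS i x) :=
    fun i j hij x =>
      aux_comm_all e he (Et j) (ΔS i) (hEt j) (hΔS i) (hfix i j hij) x
  refine ⟨?_, ?_, ?_, ?_⟩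
  · -- idempotence
    intro x
    have hkey : ∀ i, ΔS i (F x) = Et i (ΔS i x) := by
      intro i
      have hsplit : ΔS i (F x) = ∑ j, ΔS i (Et j (ΔS j x)) := by
        rw [hFapp, map_sum]
      have hzero : ∀ j : Fin N, j ≠ i → ΔS i (Et j (ΔS j x)) = 0 := by
        intro j hji
        rcases hji.lt_or_gt with hlt | hlt
        · rw [← hScomm j, hSdisj i j (ne_of_gt hlt)]
        · rw [hcomm i j hlt.le, hSdisj i j (ne_of_lt hlt), map_zero]
      have hsingle : ∑ j, ΔS i (Et j (ΔS j x)) = ΔS i (Et i (ΔS i x)) :=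
        Finset.sum_eq_single i (fun j _ hji => hzero j hji)
          (fun h => absurd (Finset.mem_univ i) h)
      rw [hsplit, hsingle, hScomm i, (hΔS i).1]
    calc F (F x) = ∑ i, Et i (ΔS i (F x)) := hFapp (F x)
      _ = ∑ i, Et i (ΔS i x) := by
          refine Finset.sum_congr rfl fun i _ => ?_
          rw [hkey i, (hEt i).1]
      _ = F x := (hFapp x).symm
  · -- strict positivity
    intro x hx
    have hterm : ∀ i, 0 ≤ ΔS i x := fun i => hPpos i hx.le
    have hex : ∃ i, ΔS i x ≠ 0 := by
      by_contra h
      push_neg at h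
      have hx0 : x = 0 := by
        rw [← hSsum x]
        simp [h]
      exact absurd hx0 (ne_of_gt hx)
    obtain ⟨i, hi⟩ := hex
    have hlt : 0 < ΔS i x := lt_of_le_of_ne (hterm i) (Ne.symm hi)
    have h1 : 0 < Et i (ΔS i x) := (hEt i).2.1 _ hlt
    have h2 : Et i (ΔS i x) ≤ F x := by
      rw [hFapp]
      exact aux_single_le_sum _ _ (fun j _ => hEpos j _ (hPpos j hx.le)) (Finset.mem_univ i)
    exact lt_of_lt_of_le h1 h2
  · -- fixes e
    calc F e = ∑ i, Et i (ΔS i e) := hFapp e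
      _ = ∑ i, ΔS i e := Finset.sum_congr rfl fun i _ => hfix i i le_rfl
      _ = e := hSsum e
  · -- order continuity
    intro V hV hVglb
    have hV0 : ∀ n, 0 ≤ V n := fun n => hVglb.1 ⟨n, rfl⟩
    constructor
    · rintro _ ⟨n, rfl⟩
      exact hFpos _ (hV0 n)
    · intro c hc
      have hle : ∀ n, F (V n) ≤ ∑ i, Et i (V n) := fun n => by
        rw [hFapp]
        exact aux_sum_le_sum _ _ _ fun i _ => hEmono i (hPle i (hV0 n))
      exact aux_glb_sum Finset.univ (fun i n => Et i (V n))
        (fun i _ n m hnm => hEmono i (hV hnm))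
        (fun i _ => (hEt i).2.2.2 V hV hVglb) c
        (fun n => le_trans (hc ⟨n, rfl⟩) (hle n))
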